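/- The projective transformation [X:Y:Z] ↦ [X : ζ₂₀⁴Y : ζ₂₀⁵Z] has order 20 in PGL_3(k̄) and preserves the quintic X⁵ + Y⁵ + XZ⁴ = 0. -/
import Mathlib


open Matrix

/-- The transformation `[X:Y:Z] ↦ [X : ζ₂₀⁴Y : ζ₂₀⁵Z]` has order `20` in `PGL₃(k̄)` (its powers
below the 20th are not scalar, and its 20th power is scalar) and it preserves the quintic
`X⁵ + Y⁵ + XZ⁴ = 0` (the substitution scales the defining polynomial by a nonzero constant). -/
theorem order_twenty_automorphism {k : Type*} [Field k] [IsAlgClosed k]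
    (hchar : ∀ p : ℕ, CharP k p → p = 0 ∨ 13 < p)
    (ζ : k) (hζ : IsPrimitiveRoot ζ 20) :
    (∀ n : ℕ, 0 < n → n < 20 →
      ¬∃ c : k, (Matrix.diagonal ![1, ζ ^ 4, ζ ^ 5]) ^ n = c • (1 : Matrix (Fin 3) (Fin 3) k)) ∧
    (∃ c : k, (Matrix.diagonal ![1, ζ ^ 4, ζ ^ 5]) ^ 20 = c • (1 : Matrix (Fin 3) (Fin 3) k)) ∧
    (∃ c : k, c ≠ 0 ∧ ∀ x y z : k,
      x ^ 5 + (ζ ^ 4 * y) ^ 5 + x * (ζ ^ 5 * z) ^ 4 = c * (x ^ 5 + y ^ 5 + x * z ^ 4)) := by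
  have hz20 : ζ ^ 20 = 1 := hζ.pow_eq_one
  have h45 : (ζ ^ 4) ^ 5 = 1 := by rw [← pow_mul]; exact hz20
  have h54 : (ζ ^ 5) ^ 4 = 1 := by rw [← pow_mul]; exact hz20
  refine ⟨?_, ?_, ?_⟩
  · rintro n hn hn' ⟨c, h⟩
    rw [Matrix.diagonal_pow] at h
    have h0 := congrFun (congrFun h 0) 0
    have h1 := congrFun (congrFun h 1) 1
    have h2 := congrFun (congrFun h 2) 2
    simp [Matrix.diagonal_apply_eq, Matrix.smul_apply, Matrix.one_apply_eq,
      Pi.pow_apply] at h0 h1 h2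
    rw [← h0] at h1 h2
    have d4 : (20 : ℕ) ∣ 4 * n := by
      refine (hζ.pow_eq_one_iff_dvd _).mp ?_
      rw [pow_mul]; exact h1
    have d5 : (20 : ℕ) ∣ 5 * n := by
      refine (hζ.pow_eq_one_iff_dvd _).mp ?_
      rw [pow_mul]; exact h2
    omega
  · refine ⟨1, ?_⟩
    rw [Matrix.diagonal_pow, one_smul]
    have : (![1, ζ ^ 4, ζ ^ 5] : Fin 3 → k) ^ 20 = 1 := by
      funext i
      have h80 : ζ ^ 80 = 1 := by
        rw [show (80 : ℕ) = 20 * 4 from rfl, pow_mul, hz20, one_pow]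
      have h100 : ζ ^ 100 = 1 := by
        rw [show (100 : ℕ) = 20 * 5 from rfl, pow_mul, hz20, one_pow]
      fin_cases i <;> simp [← pow_mul, h80, h100]
    rw [this]
    exact Matrix.diagonal_one
  · refine ⟨1, one_ne_zero, fun x y z => ?_⟩
    rw [mul_pow, mul_pow, h45, h54]
    ring
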